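/- arXiv:1103.2817 — 2 statements merged into one kernel-verified Lean document; each statement's English description precedes it below -/
import Mathlib

section
/- On ℝ × ℝ, with L = (1/2)∂²_y + y∂_x − (x³+y)∂_y, let w(x,y) = a(x⁴/2 + y²) + bxy and W̃ = exp(w). If a, b, ε > 0 satisfy 2a² − 2a + b(1 + ε/2) < 0 and b > 0, then there exist constants α, K > 0 such that (LW̃)/W̃ (x,y) ≤ K − α(1 + y² + x⁴) for all (x,y) ∈ ℝ². In particular, L log W̃ + (1/2)|∂_y log W̃|² = a + (2a²−2a)y² − bx⁴ + bxy, which is bounded above by K − α(1+y²+x⁴) using bxy ≤ (ε/2)by² + b x²/(2ε) and bx²/(2ε) ≤ (b/2)x⁴ + constant. -/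
theorem stmt_11 (a b ε : ℝ) (ha : 0 < a) (hb : 0 < b) (hε : 0 < ε)
    (hab : 2*a^2 - 2*a + b*(1 + ε/2) < 0)
    (w : ℝ → ℝ → ℝ) (hw : ∀ x y, w x y = a*(x^4/2 + y^2) + b*x*y)
    (Wt : ℝ → ℝ → ℝ) (hWt : ∀ x y, Wt x y = Real.exp (w x y)) :
    ∃ α > 0, ∃ K > 0, ∀ x y : ℝ,
      ((1/2) * deriv (fun y' => deriv (fun y'' => Wt x y'') y') y
        + y * deriv (fun x' => Wt x' y) x
        - (x^3 + y) * deriv (fun y' => Wt x y') y) / Wt x y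
      ≤ K - α * (1 + y^2 + x^4) := by
  -- derivatives
  have hexp : ∀ x y : ℝ, HasDerivAt (fun y' => Real.exp (w x y'))
      ((2*a*y + b*x) * Real.exp (w x y)) y := by
    intro x y
    have h1 : HasDerivAt (fun y' : ℝ => a*(x^4/2 + y'^2) + b*x*y')
        (a*(0 + 2*y^1) + b*x*1) y :=
      (((hasDerivAt_const y (x^4/2)).add (by simpa using hasDerivAt_pow 2 y)).const_mul a).add
        ((hasDerivAt_id y).const_mul (b*x))
    have h2 := h1.exp
    simp only [hw]
    convert h2 using 1
    push_cast; ring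
  have hdy : ∀ x y : ℝ, HasDerivAt (fun y' => Wt x y')
      ((2*a*y + b*x) * Real.exp (w x y)) y := by
    intro x y
    simpa only [hWt] using hexp x y
  have hdx : ∀ x y : ℝ, HasDerivAt (fun x' => Wt x' y)
      ((2*a*x^3 + b*y) * Real.exp (w x y)) x := by
    intro x y
    have h1 : HasDerivAt (fun x' : ℝ => a*(x'^4/2 + y^2) + b*x'*y)
        (a*((4*x^3)/2 + 0) + b*1*y) x :=
      ((((by simpa using hasDerivAt_pow 4 x : HasDerivAt (fun x' : ℝ => x'^4) (4*x^3) x).div_const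
        2).add (hasDerivAt_const x (y^2))).const_mul a).add
        (((hasDerivAt_id x).const_mul b).mul_const y)
    have h2 := h1.exp
    simp only [hWt, hw]
    convert h2 using 1
    push_cast; ring
  have hd2 : ∀ x y : ℝ, HasDerivAt (fun y' => (2*a*y' + b*x) * Real.exp (w x y'))
      ((2*a) * Real.exp (w x y) + (2*a*y + b*x) * ((2*a*y + b*x) * Real.exp (w x y))) y := by
    intro x y
    have hlin : HasDerivAt (fun y' : ℝ => 2*a*y' + b*x) (2*a) y := by
      simpa using (((hasDerivAt_id y).const_mul (2*a)).add_const (b*x))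
    exact hlin.mul (hexp x y)
  -- constants
  set s : ℝ := -(2*a^2 - 2*a + b) with hs_def
  have hs : 0 < s := by simp only [hs_def]; nlinarith
  set c : ℝ := b*(2*a - 1) with hc_def
  set M : ℝ := b^2/2 + c^2/s with hM_def
  set α : ℝ := min (s/2) (b/2) with hα_def
  have hα : 0 < α := lt_min (by linarith) (by linarith)
  have hα1 : α ≤ s/2 := min_le_left _ _
  have hα2 : α ≤ b/2 := min_le_right _ _
  refine ⟨α, hα, a + α + M^2/(2*b) + 1, by positivity, fun x y => ?_⟩
  have hE : Real.exp (w x y) ≠ 0 := (Real.exp_pos _).ne'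
  -- rewrite derivatives
  have Dy : ∀ y' : ℝ, deriv (fun y'' => Wt x y'') y' = (2*a*y' + b*x) * Real.exp (w x y') :=
    fun y' => (hdy x y').deriv
  have Dx : deriv (fun x' => Wt x' y) x = (2*a*x^3 + b*y) * Real.exp (w x y) := (hdx x y).deriv
  have D2 : deriv (fun y' => deriv (fun y'' => Wt x y'') y') y
      = (2*a) * Real.exp (w x y) + (2*a*y + b*x) * ((2*a*y + b*x) * Real.exp (w x y)) := by
    have : (fun y' => deriv (fun y'' => Wt x y'') y')
        = fun y' => (2*a*y' + b*x) * Real.exp (w x y') := funext Dy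
    rw [this]
    exact (hd2 x y).deriv
  rw [D2, Dx, Dy y, hWt]
  have hnum : (1/2) * ((2*a) * Real.exp (w x y) + (2*a*y + b*x) * ((2*a*y + b*x) * Real.exp (w x y)))
        + y * ((2*a*x^3 + b*y) * Real.exp (w x y))
        - (x^3 + y) * ((2*a*y + b*x) * Real.exp (w x y))
      = (a + (2*a^2 - 2*a + b)*y^2 + c*x*y + b^2/2*x^2 - b*x^4) * Real.exp (w x y) := by
    simp only [hc_def]; ring
  rw [hnum, mul_div_assoc, div_self hE, mul_one]
  -- final polynomial inequality
  have h1 : c*x*y ≤ s/4*y^2 + c^2/s*x^2 := by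
    rw [← sub_nonneg]
    have e : s/4*y^2 + c^2/s*x^2 - c*x*y = ((s/2)*y - c*x)^2 / s := by
      field_simp; ring
    rw [e]; positivity
  have h2 : M*x^2 ≤ b/2*x^4 + M^2/(2*b) := by
    rw [← sub_nonneg]
    have e : b/2*x^4 + M^2/(2*b) - M*x^2 = (b*x^2 - M)^2 / (2*b) := by
      field_simp; ring
    rw [e]; positivity
  have hM : b^2/2*x^2 + c^2/s*x^2 = M*x^2 := by rw [hM_def]; ring
  have hsy : 2*a^2 - 2*a + b = -s := by rw [hs_def]; ring
  nlinarith [sq_nonneg y, sq_nonneg (x^2), mul_nonneg (by linarith : (0:ℝ) ≤ s/2 - α) (sq_nonneg y),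
    mul_nonneg (by linarith : (0:ℝ) ≤ b/2 - α) (sq_nonneg (x^2))]
end

section
/- Let μ, ν be probability measures on a measurable space with ν = f·μ for a bounded measurable density f ≥ 0 with μ(f) = 1. Then the total variation distance satisfies ‖ν − μ‖_{TV} ≤ √(2 μ(f log f)) (Pinsker's inequality), where μ(f log f) is the relative entropy of ν with respect to μ. -/
open MeasureTheory

private lemma phi_hasDeriv {y : ℝ} (hy : 0 < y) :
    HasDerivAt (fun y : ℝ => (y + 1) * Real.log y - 2 * (y - 1))
      (Real.log y + (y + 1) / y - 2) y := by
  have h1 : HasDerivAt (fun y : ℝ => (y + 1) * Real.log y)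
      (1 * Real.log y + (y + 1) * y⁻¹) y :=
    ((hasDerivAt_id y).add_const 1).mul (Real.hasDerivAt_log hy.ne')
  have h2 : HasDerivAt (fun y : ℝ => 2 * (y - 1)) 2 y := by
    simpa using ((hasDerivAt_id y).sub_const 1).const_mul 2
  have := h1.sub h2
  refine this.congr_deriv ?_
  field_simp

private lemma phi_sign {x : ℝ} (hx : 0 < x) :
    (x ≤ 1 → (x + 1) * Real.log x - 2 * (x - 1) ≤ 0) ∧
    (1 ≤ x → 0 ≤ (x + 1) * Real.log x - 2 * (x - 1)) := by
  set φ : ℝ → ℝ := fun y => (y + 1) * Real.log y - 2 * (y - 1) with hφ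
  have hcont : ∀ a b : ℝ, 0 < a → ContinuousOn φ (Set.Icc a b) := by
    intro a b ha
    apply ContinuousOn.sub
    · exact (continuousOn_id.add continuousOn_const).mul
        (Real.continuousOn_log.mono (by
          intro z hz
          simp only [Set.mem_compl_iff, Set.mem_singleton_iff]
          exact (lt_of_lt_of_le ha hz.1).ne'))
    · exact continuousOn_const.mul (continuousOn_id.sub continuousOn_const)
  have hdiff : ∀ a b : ℝ, 0 < a → DifferentiableOn ℝ φ (interior (Set.Icc a b)) := by
    intro a b ha
    rw [interior_Icc]
    intro z hz
    exact ((phi_hasDeriv (lt_trans ha hz.1)).differentiableAt).differentiableWithinAt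
  have hderiv : ∀ z : ℝ, 0 < z → deriv φ z = Real.log z + (z + 1) / z - 2 := fun z hz =>
    (phi_hasDeriv hz).deriv
  have hdnn : ∀ z : ℝ, 0 < z → 0 ≤ deriv φ z := by
    intro z hz
    rw [hderiv z hz]
    have h1 := Real.one_sub_inv_le_log_of_pos hz
    have : (z + 1) / z = 1 + z⁻¹ := by field_simp
    rw [this]
    linarith
  have hphi1 : φ 1 = 0 := by simp [hφ]
  constructor
  · intro hx1
    have hm : MonotoneOn φ (Set.Icc x 1) :=
      monotoneOn_of_deriv_nonneg (convex_Icc x 1) (hcont x 1 hx) (hdiff x 1 hx)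
        (fun z hz => by
          rw [interior_Icc] at hz
          exact hdnn z (lt_trans hx hz.1))
    have := hm (Set.left_mem_Icc.2 hx1) (Set.right_mem_Icc.2 hx1) hx1
    rw [hphi1] at this
    exact this
  · intro hx1
    have hm : MonotoneOn φ (Set.Icc 1 x) :=
      monotoneOn_of_deriv_nonneg (convex_Icc 1 x) (hcont 1 x one_pos) (hdiff 1 x one_pos)
        (fun z hz => by
          rw [interior_Icc] at hz
          exact hdnn z (lt_trans one_pos hz.1))
    have := hm (Set.left_mem_Icc.2 hx1) (Set.right_mem_Icc.2 hx1) hx1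
    rw [hphi1] at this
    exact this

private lemma psi_hasDeriv {y : ℝ} (hy : 0 < y) :
    HasDerivAt (fun y : ℝ => (2 * y + 4) * (y * Real.log y - y + 1) - 3 * (y - 1) ^ 2)
      (4 * ((y + 1) * Real.log y - 2 * (y - 1))) y := by
  have hylog : HasDerivAt (fun y : ℝ => y * Real.log y) (1 * Real.log y + y * y⁻¹) y :=
    (hasDerivAt_id y).mul (Real.hasDerivAt_log hy.ne')
  have h1 : HasDerivAt (fun y : ℝ => y * Real.log y - y + 1)
      (1 * Real.log y + y * y⁻¹ - 1) y := (hylog.sub (hasDerivAt_id y)).add_const 1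
  have h2 : HasDerivAt (fun y : ℝ => 2 * y + 4) 2 y := by
    simpa using ((hasDerivAt_id y).const_mul 2).add_const 4
  have h3 : HasDerivAt (fun y : ℝ => 3 * (y - 1) ^ 2) (3 * (2 * (y - 1) ^ 1 * 1)) y :=
    (((hasDerivAt_id y).sub_const 1).pow 2).const_mul 3
  have := (h2.mul h1).sub h3
  refine this.congr_deriv ?_
  have : y * y⁻¹ = 1 := mul_inv_cancel₀ hy.ne'
  rw [this]
  ring

private lemma key_ineq {x : ℝ} (hx : 0 ≤ x) :
    3 * (x - 1) ^ 2 ≤ (2 * x + 4) * (x * Real.log x - x + 1) := by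
  rcases eq_or_lt_of_le hx with h0 | hx
  · rw [← h0]; norm_num
  set ψ : ℝ → ℝ := fun y => (2 * y + 4) * (y * Real.log y - y + 1) - 3 * (y - 1) ^ 2 with hψ
  have hψ1 : ψ 1 = 0 := by simp [hψ]
  have hgoal : 0 ≤ ψ x → 3 * (x - 1) ^ 2 ≤ (2 * x + 4) * (x * Real.log x - x + 1) := by
    intro h; simpa [hψ] using h
  apply hgoal
  have hcont : ∀ a b : ℝ, 0 < a → ContinuousOn ψ (Set.Icc a b) := by
    intro a b ha
    apply ContinuousOn.sub
    · apply ContinuousOn.mul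
      · fun_prop
      · apply ContinuousOn.add
        apply ContinuousOn.sub
        · exact continuousOn_id.mul (Real.continuousOn_log.mono (by
            intro z hz
            simp only [Set.mem_compl_iff, Set.mem_singleton_iff]
            exact (lt_of_lt_of_le ha hz.1).ne'))
        · exact continuousOn_id
        · exact continuousOn_const
    · fun_prop
  have hdiff : ∀ a b : ℝ, 0 < a → DifferentiableOn ℝ ψ (interior (Set.Icc a b)) := by
    intro a b ha
    rw [interior_Icc]
    intro z hz
    exact ((psi_hasDeriv (lt_trans ha hz.1)).differentiableAt).differentiableWithinAt
  have hderiv : ∀ z : ℝ, 0 < z →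
      deriv ψ z = 4 * ((z + 1) * Real.log z - 2 * (z - 1)) := fun z hz =>
    (psi_hasDeriv hz).deriv
  rcases le_total x 1 with hx1 | hx1
  · have hm : AntitoneOn ψ (Set.Icc x 1) :=
      antitoneOn_of_deriv_nonpos (convex_Icc x 1) (hcont x 1 hx) (hdiff x 1 hx)
        (fun z hz => by
          rw [interior_Icc] at hz
          have hz0 : 0 < z := lt_trans hx hz.1
          rw [hderiv z hz0]
          have := (phi_sign hz0).1 hz.2.le
          linarith)
    have := hm (Set.left_mem_Icc.2 hx1) (Set.right_mem_Icc.2 hx1) hx1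
    rw [hψ1] at this
    exact this
  · have hm : MonotoneOn ψ (Set.Icc 1 x) :=
      monotoneOn_of_deriv_nonneg (convex_Icc 1 x) (hcont 1 x one_pos) (hdiff 1 x one_pos)
        (fun z hz => by
          rw [interior_Icc] at hz
          have hz0 : 0 < z := lt_trans one_pos hz.1
          rw [hderiv z hz0]
          have := (phi_sign hz0).2 hz.1.le
          linarith)
    have := hm (Set.left_mem_Icc.2 hx1) (Set.right_mem_Icc.2 hx1) hx1
    rw [hψ1] at this
    exact this

private lemma H_nonneg {x : ℝ} (hx : 0 ≤ x) : 0 ≤ x * Real.log x - x + 1 := by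
  rcases eq_or_lt_of_le hx with h0 | hx
  · rw [← h0]; simp
  · have h := Real.one_sub_inv_le_log_of_pos hx
    have h2 : x * (1 - x⁻¹) ≤ x * Real.log x :=
      mul_le_mul_of_nonneg_left h hx.le
    have h3 : x * (1 - x⁻¹) = x - 1 := by field_simp
    rw [h3] at h2
    linarith

private lemma abs_mul_log_le {x : ℝ} (hx : 0 ≤ x) : |x * Real.log x| ≤ x ^ 2 + 1 := by
  rcases eq_or_lt_of_le hx with h0 | hx
  · rw [← h0]; norm_num
  rcases le_total x 1 with hx1 | hx1
  · have h1 : x - 1 ≤ x * Real.log x := by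
      have := H_nonneg hx.le; linarith
    have h2 : x * Real.log x ≤ 0 :=
      mul_nonpos_of_nonneg_of_nonpos hx.le (Real.log_nonpos hx.le hx1)
    rw [abs_le]; constructor <;> nlinarith
  · have h1 : 0 ≤ x * Real.log x :=
      mul_nonneg hx.le (Real.log_nonneg hx1)
    have h2 : Real.log x ≤ x - 1 := Real.log_le_sub_one_of_pos hx
    rw [abs_le]; constructor <;> nlinarith

private lemma pointwise_bound {x t : ℝ} (hx : 0 ≤ x) (ht : 0 < t) :
    2 * Real.sqrt 3 * |x - 1| ≤ t * (2 * x + 4) + (x * Real.log x - x + 1) / t := by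
  set H := x * Real.log x - x + 1 with hH
  have hHnn : 0 ≤ H := H_nonneg hx
  have h1 : Real.sqrt (3 * (x - 1) ^ 2) = Real.sqrt 3 * |x - 1| := by
    rw [Real.sqrt_mul (by norm_num), Real.sqrt_sq_eq_abs]
  have h2 : Real.sqrt (3 * (x - 1) ^ 2) ≤ Real.sqrt ((2 * x + 4) * H) :=
    Real.sqrt_le_sqrt (key_ineq hx)
  have h3 : Real.sqrt ((2 * x + 4) * H) ≤ (t * (2 * x + 4) + H / t) / 2 := by
    have heq : (2 * x + 4) * H = (t * (2 * x + 4)) * (H / t) := by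
      field_simp
    rw [heq, Real.sqrt_mul (by positivity)]
    have ha := Real.sq_sqrt (show (0:ℝ) ≤ t * (2 * x + 4) by positivity)
    have hb := Real.sq_sqrt (show (0:ℝ) ≤ H / t by positivity)
    nlinarith [sq_nonneg (Real.sqrt (t * (2 * x + 4)) - Real.sqrt (H / t))]
  rw [h1] at h2
  linarith

theorem stmt_17 {Ω : Type*} [MeasurableSpace Ω] (μ : Measure Ω)
    [IsProbabilityMeasure μ]
    (f : Ω → ℝ) (hf : Measurable f) (hfpos : ∀ ω, 0 ≤ f ω)
    (M : ℝ) (hfM : ∀ ω, f ω ≤ M)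
    (hf1 : ∫ ω, f ω ∂μ = 1) :
    ∫ ω, |f ω - 1| ∂μ ≤ Real.sqrt (2 * ∫ ω, f ω * Real.log (f ω) ∂μ) := by
  set K := ∫ ω, f ω * Real.log (f ω) ∂μ with hK
  set I := ∫ ω, |f ω - 1| ∂μ with hI
  have int_f : Integrable f μ := by
    apply Integrable.mono' (integrable_const M) hf.aestronglyMeasurable
    filter_upwards with ω
    rw [Real.norm_eq_abs, abs_of_nonneg (hfpos ω)]
    exact hfM ω
  have int_flogf : Integrable (fun ω => f ω * Real.log (f ω)) μ := by
    apply Integrable.mono' (integrable_const (M ^ 2 + 1))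
      (hf.mul (Real.measurable_log.comp hf)).aestronglyMeasurable
    filter_upwards with ω
    rw [Real.norm_eq_abs]
    simp only [Pi.mul_apply, Function.comp_apply]
    have h := abs_mul_log_le (hfpos ω)
    have hM : f ω ^ 2 ≤ M ^ 2 := by nlinarith [hfpos ω, hfM ω]
    linarith
  have int_abs : Integrable (fun ω => |f ω - 1|) μ := by
    apply Integrable.mono' (integrable_const (M + 1))
      ((hf.sub measurable_const).abs).aestronglyMeasurable
    filter_upwards with ω
    rw [Real.norm_eq_abs, abs_abs, Pi.sub_apply, abs_sub_comm]
    calc |1 - f ω| ≤ |(1:ℝ)| + |f ω| := abs_sub _ _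
    _ ≤ M + 1 := by rw [abs_one, abs_of_nonneg (hfpos ω)]; linarith [hfM ω]
  have i2 : Integrable (fun ω => f ω * Real.log (f ω) - f ω) μ := int_flogf.sub int_f
  have i2' : Integrable (fun ω => f ω * Real.log (f ω) - f ω + 1) μ :=
    i2.add (integrable_const 1)
  have hint2 : ∫ ω, (f ω * Real.log (f ω) - f ω + 1) ∂μ = K := by
    rw [integral_add i2 (integrable_const 1), integral_sub int_flogf int_f, hf1]
    simp
    rfl
  have hKnn : 0 ≤ K := by
    have h1 : 0 ≤ ∫ ω, (f ω * Real.log (f ω) - f ω + 1) ∂μ :=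
      integral_nonneg fun ω => H_nonneg (hfpos ω)
    rw [hint2] at h1
    exact h1
  have s3 : (0:ℝ) < Real.sqrt 3 := Real.sqrt_pos.2 (by norm_num)
  have h3sq : Real.sqrt 3 ^ 2 = 3 := Real.sq_sqrt (by norm_num)
  have main : ∀ t : ℝ, 0 < t → I ≤ (6 * t + K / t) / (2 * Real.sqrt 3) := by
    intro t ht
    have i1 : Integrable (fun ω => 2 * f ω + 4) μ :=
      (int_f.const_mul 2).add (integrable_const 4)
    have i3 : Integrable (fun ω => t * (2 * f ω + 4)) μ := i1.const_mul t
    have i4 : Integrable (fun ω => (f ω * Real.log (f ω) - f ω + 1) / t) μ :=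
      i2'.div_const t
    have hmono : ∫ ω, 2 * Real.sqrt 3 * |f ω - 1| ∂μ ≤
        ∫ ω, (t * (2 * f ω + 4) + (f ω * Real.log (f ω) - f ω + 1) / t) ∂μ := by
      apply integral_mono (int_abs.const_mul _) (i3.add i4)
      intro ω
      exact pointwise_bound (hfpos ω) ht
    have hL : ∫ ω, 2 * Real.sqrt 3 * |f ω - 1| ∂μ = 2 * Real.sqrt 3 * I := by
      rw [hI, integral_const_mul]
    have hR : ∫ ω, (t * (2 * f ω + 4) + (f ω * Real.log (f ω) - f ω + 1) / t) ∂μ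
        = 6 * t + K / t := by
      rw [integral_add i3 i4, integral_const_mul, integral_div, hint2,
        integral_add (int_f.const_mul 2) (integrable_const 4), integral_const_mul, hf1]
      simp
      ring
    rw [hL] at hmono
    rw [hR] at hmono
    rw [le_div_iff₀ (by positivity)]
    linarith
  rcases eq_or_lt_of_le hKnn with hK0 | hKpos
  · have h0 : I ≤ 0 := by
      by_contra h
      push_neg at h
      have ht : (0:ℝ) < I / (2 * Real.sqrt 3) := by positivity
      have hb := main _ ht
      rw [← hK0, zero_div, add_zero] at hb
      have heq : 6 * (I / (2 * Real.sqrt 3)) / (2 * Real.sqrt 3) = I / 2 := by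
        rw [eq_comm]
        field_simp
        nlinarith [h3sq]
      rw [heq] at hb
      linarith
    calc I ≤ 0 := h0
    _ ≤ _ := Real.sqrt_nonneg _
  · set s := Real.sqrt (2 * K) with hs
    have hspos : 0 < s := Real.sqrt_pos.2 (by linarith)
    have hs2 : s ^ 2 = 2 * K := Real.sq_sqrt (by linarith)
    have hb := main (s / (2 * Real.sqrt 3)) (by positivity)
    have heq : (6 * (s / (2 * Real.sqrt 3)) + K / (s / (2 * Real.sqrt 3))) /
        (2 * Real.sqrt 3) = s := by
      rw [eq_comm]
      field_simp
      nlinarith [h3sq, hs2, hspos, s3]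
    rw [heq] at hb
    exact hb
end
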